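/- In G = A ∗_C B, the length of a reduced form is an invariant of the element: if c·g₁⋯gₙ and c'·h₁⋯h_m are two reduced forms representing the same element of G, then n = m. Moreover, an element admitting a reduced form c·g₁⋯gₙ equals the identity of G if and only if n = 0 and c = 1. -/

import Mathlib

open Monoid

universe u

/-- The two factors of the amalgam, indexed by `Bool`. -/
def Fac (A B : Type u) : Bool → Type u
  | true => A
  | false => B

instance FacGroup (A B : Type u) [Group A] [Group B] : (b : Bool) → Group (Fac A B b)
  | true => inferInstanceAs (Group A)
  | false => inferInstanceAs (Group B)

variable {A B C : Type u} [Group A] [Group B] [Group C]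

/-- The family of monomorphisms `C → A`, `C → B`. -/
def amalgHom (φ : C →* A) (ψ : C →* B) : (b : Bool) → C →* Fac A B b
  | true => φ
  | false => ψ

variable (φ : C →* A) (ψ : C →* B)

/-- The amalgamated free product `G = A ∗_C B`, i.e. the pushout of `φ` and `ψ`. -/
abbrev Amalg : Type u := Monoid.PushoutI (amalgHom φ ψ)

/-- The factor `A`, identified with its image in `G = A ∗_C B`. -/
def facA : Subgroup (Amalg φ ψ) := (Monoid.PushoutI.of (φ := amalgHom φ ψ) true).range

/-- The factor `B`, identified with its image in `G = A ∗_C B`. -/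
def facB : Subgroup (Amalg φ ψ) := (Monoid.PushoutI.of (φ := amalgHom φ ψ) false).range

/-- The amalgamated subgroup `C`, identified with its image in `G = A ∗_C B`. -/
def amalgC : Subgroup (Amalg φ ψ) := (Monoid.PushoutI.base (amalgHom φ ψ)).range

/-- `c * g₁ ⋯ gₙ` (with the list `L = [g₁, …, gₙ]`) is a reduced form:
`c ∈ C`, each `gᵢ ∈ (A ∪ B) ∖ C`, and consecutive letters lie in different factors. -/
def ReducedForm (c : Amalg φ ψ) (L : List (Amalg φ ψ)) : Prop :=
  c ∈ amalgC φ ψ ∧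
  (∀ x ∈ L, (x ∈ facA φ ψ ∨ x ∈ facB φ ψ) ∧ x ∉ amalgC φ ψ) ∧
  L.Chain' (fun x y => (x ∈ facA φ ψ → y ∈ facB φ ψ) ∧ (x ∈ facB φ ψ → y ∈ facA φ ψ))

/-- A reduced form `c * g₁ ⋯ gₙ` is cyclically reduced if `n = 0`, or `n = 1` and the
element is not conjugate to an element of `C`, or `n ≥ 2` and `g₁`, `gₙ` lie in different
factors. -/
def CyclicallyReducedForm (c : Amalg φ ψ) (L : List (Amalg φ ψ)) : Prop :=
  ReducedForm φ ψ c L ∧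
  (L.length = 0 ∨
    (L.length = 1 ∧ ∀ x : Amalg φ ψ, x⁻¹ * (c * L.prod) * x ∉ amalgC φ ψ) ∨
    (2 ≤ L.length ∧ ∀ x y : Amalg φ ψ, x ∈ L.head? → y ∈ L.getLast? →
      ((x ∈ facA φ ψ → y ∈ facB φ ψ) ∧ (x ∈ facB φ ψ → y ∈ facA φ ψ))))

/-- An element of `G = A ∗_C B` is cyclically reduced if it has a cyclically reduced
reduced form. -/
def CyclicallyReduced (g : Amalg φ ψ) : Prop :=
  ∃ (c : Amalg φ ψ) (L : List (Amalg φ ψ)), g = c * L.prod ∧ CyclicallyReducedForm φ ψ c L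


open Monoid.PushoutI Monoid.PushoutI.NormalWord in
theorem amalg_inj (hφ : Function.Injective φ) (hψ : Function.Injective ψ) :
    ∀ b, Function.Injective (amalgHom φ ψ b) := by
  intro b
  cases b
  · exact hψ
  · exact hφ

open Monoid.PushoutI Monoid.PushoutI.NormalWord in
theorem mem_amalgC_of_mem_both (hφ' : ∀ b, Function.Injective (amalgHom φ ψ b))
    {x : Amalg φ ψ} (hA : x ∈ facA φ ψ) (hB : x ∈ facB φ ψ) : x ∈ amalgC φ ψ := by
  have h := inf_of_range_eq_base_range hφ' (i := true) (j := false) (by simp)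
  have : x ∈ (PushoutI.of (φ := amalgHom φ ψ) true).range ⊓
      (PushoutI.of (φ := amalgHom φ ψ) false).range := ⟨hA, hB⟩
  rw [h] at this
  exact this

open Monoid.PushoutI Monoid.PushoutI.NormalWord in
theorem exists_normalWord (hφ' : ∀ b, Function.Injective (amalgHom φ ψ b))
    (d : Transversal (amalgHom φ ψ)) (L : List (Amalg φ ψ))
    (hmem : ∀ x ∈ L, (x ∈ facA φ ψ ∨ x ∈ facB φ ψ) ∧ x ∉ amalgC φ ψ)
    (hchain : L.Chain' (fun x y => (x ∈ facA φ ψ → y ∈ facB φ ψ) ∧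
      (x ∈ facB φ ψ → y ∈ facA φ ψ))) :
    ∃ w : NormalWord d, w.prod = L.prod ∧ w.toList.length = L.length ∧
      ∀ b, w.fstIdx = some b → ∃ x, L.head? = some x ∧
        x ∈ (cond b (facA φ ψ) (facB φ ψ)) := by
  induction L with
  | nil =>
    refine ⟨NormalWord.empty, by simp, by simp [NormalWord.empty, CoprodI.Word.empty], ?_⟩
    intro b hb
    simp [CoprodI.Word.fstIdx, NormalWord.empty, CoprodI.Word.empty] at hb
  | cons x L ih =>
    obtain ⟨w, hprod, hlen, hfst⟩ := ih
      (fun y hy => hmem y (List.mem_cons_of_mem _ hy)) hchain.tail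
    obtain ⟨hxf, hxc⟩ := hmem x (List.mem_cons_self)
    have hhead : ∀ y, L.head? = some y →
        ((x ∈ facA φ ψ → y ∈ facB φ ψ) ∧ (x ∈ facB φ ψ → y ∈ facA φ ψ)) := by
      intro y hy
      cases L with
      | nil => simp at hy
      | cons z L' =>
        simp only [List.head?_cons, Option.some.injEq] at hy
        subst hy
        exact (List.isChain_cons_cons.mp hchain).1
    rcases hxf with hx | hx
    · obtain ⟨a, ha⟩ := hx
      have har : a ∉ (amalgHom φ ψ true).range := by
        rintro ⟨t, rfl⟩
        exact hxc ⟨t, (PushoutI.of_apply_eq_base (amalgHom φ ψ) true t).symm.trans ha⟩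
      have hne : w.fstIdx ≠ some true := by
        intro hfi
        obtain ⟨y, hy, hyA⟩ := hfst true hfi
        have hyB : y ∈ facB φ ψ := (hhead y hy).1 ⟨a, ha⟩
        have : y ∈ amalgC φ ψ := mem_amalgC_of_mem_both φ ψ hφ' hyA hyB
        have hyL : y ∈ L := List.mem_of_mem_head? hy
        exact (hmem y (List.mem_cons_of_mem _ hyL)).2 this
      refine ⟨NormalWord.cons a w hne har, ?_, ?_, ?_⟩
      · rw [prod_cons, hprod, ha, List.prod_cons]
      · simp [NormalWord.cons, CoprodI.Word.cons, hlen]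
      · intro b hb
        have hb' : b = true := by
          simpa [NormalWord.cons, CoprodI.Word.cons, CoprodI.Word.fstIdx] using hb
        subst hb'
        exact ⟨x, rfl, ⟨a, ha⟩⟩
    · obtain ⟨a, ha⟩ := hx
      have har : a ∉ (amalgHom φ ψ false).range := by
        rintro ⟨t, rfl⟩
        exact hxc ⟨t, (PushoutI.of_apply_eq_base (amalgHom φ ψ) false t).symm.trans ha⟩
      have hne : w.fstIdx ≠ some false := by
        intro hfi
        obtain ⟨y, hy, hyB⟩ := hfst false hfi
        have hyA : y ∈ facA φ ψ := (hhead y hy).2 ⟨a, ha⟩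
        have : y ∈ amalgC φ ψ := mem_amalgC_of_mem_both φ ψ hφ' hyA hyB
        have hyL : y ∈ L := List.mem_of_mem_head? hy
        exact (hmem y (List.mem_cons_of_mem _ hyL)).2 this
      refine ⟨NormalWord.cons a w hne har, ?_, ?_, ?_⟩
      · rw [prod_cons, hprod, ha, List.prod_cons]
      · simp [NormalWord.cons, CoprodI.Word.cons, hlen]
      · intro b hb
        have hb' : b = false := by
          simpa [NormalWord.cons, CoprodI.Word.cons, CoprodI.Word.fstIdx] using hb
        subst hb'
        exact ⟨x, rfl, ⟨a, ha⟩⟩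

open Monoid.PushoutI Monoid.PushoutI.NormalWord in
theorem reducedForm_length_eq
    (hφ : Function.Injective φ) (hψ : Function.Injective ψ)
    {c c' : Amalg φ ψ} {L L' : List (Amalg φ ψ)}
    (h : ReducedForm φ ψ c L) (h' : ReducedForm φ ψ c' L')
    (heq : c * L.prod = c' * L'.prod) : L.length = L'.length := by
  have hφ' := amalg_inj φ ψ hφ hψ
  obtain ⟨d⟩ := transversal_nonempty (amalgHom φ ψ) hφ'
  obtain ⟨w, hwprod, hwlen, -⟩ := exists_normalWord φ ψ hφ' d L h.2.1 h.2.2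
  obtain ⟨w', hwprod', hwlen', -⟩ := exists_normalWord φ ψ hφ' d L' h'.2.1 h'.2.2
  obtain ⟨h₀, hc⟩ := h.1
  obtain ⟨h₀', hc'⟩ := h'.1
  have key : (h₀ • w : NormalWord d) = h₀' • w' := by
    apply prod_injective
    rw [prod_base_smul, prod_base_smul, hwprod, hwprod', hc, hc', heq]
  have ht := congrArg (fun w : NormalWord d => w.toList) key
  rw [← hwlen, ← hwlen']
  exact congrArg List.length ht

/-- In `G = A ∗_C B` the length of a reduced form is an invariant of the element,
and an element with reduced form `c·g₁⋯gₙ` is trivial iff `n = 0` and `c = 1`. -/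
theorem reducedForm_length_unique
    (hφ : Function.Injective φ) (hψ : Function.Injective ψ)
    (c c' : Amalg φ ψ) (L L' : List (Amalg φ ψ))
    (h : ReducedForm φ ψ c L) (h' : ReducedForm φ ψ c' L')
    (heq : c * L.prod = c' * L'.prod) :
    L.length = L'.length ∧
    (∀ (c₀ : Amalg φ ψ) (L₀ : List (Amalg φ ψ)), ReducedForm φ ψ c₀ L₀ →
      (c₀ * L₀.prod = 1 ↔ (L₀ = [] ∧ c₀ = 1))) := by
  have hnil : ReducedForm φ ψ 1 [] := ⟨one_mem _, by simp, List.isChain_nil⟩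
  refine ⟨reducedForm_length_eq φ ψ hφ hψ h h' heq, ?_⟩
  intro c₀ L₀ h₀
  constructor
  · intro h1
    have : L₀.length = ([] : List (Amalg φ ψ)).length :=
      reducedForm_length_eq φ ψ hφ hψ h₀ hnil (by simpa using h1)
    have hL : L₀ = [] := List.length_eq_zero_iff.mp (by simpa using this)
    subst hL
    simpa using h1
  · rintro ⟨rfl, rfl⟩
    simp
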